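/- arXiv:1003.5024 — 3 statements merged into one kernel-verified Lean document; each statement's English description precedes it below -/
import Mathlib

section
/- Let h₁, h₂ be Borel probability measures on S¹×ℝ, K > 0, and f : ℝ → ℝ 2π-periodic with sup|f| = M and Lipschitz constant L > 0. Let x₁ and x₂ be the characteristic flows with initial measures h₁ and h₂ respectively (so dx_i/dt(t;θ,ω) = ω + K ∫ f(x_i(t;θ',ω') − x_i(t;θ,ω)) dh_i(θ',ω'), x_i(0;θ,ω) = θ). Suppose δ > 0 is such that for all s ≥ 0 and all φ ∈ ℝ, |∫_{S¹×ℝ} f(x₁(s;θ',ω') − φ) (dh₁ − dh₂)(θ',ω')| ≤ Mδ. Then ∫_{S¹×ℝ} |x₁(t;θ,ω) − x₂(t;θ,ω)| dh₂(θ,ω) ≤ (Mδ/(2L)) (e^{2KLt} − 1) for all t ≥ 0. -/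
open MeasureTheory Real Filter

noncomputable section

instance : Fact (0 < 2 * Real.pi) := ⟨by positivity⟩

lemma aux_integrable_of_bound {α : Type*} [MeasurableSpace α] {μ : Measure α}
    [IsFiniteMeasure μ] {u : α → ℝ} (hu : AEStronglyMeasurable u μ) {C : ℝ}
    (hb : ∀ q, |u q| ≤ C) : Integrable u μ := by
  refine (integrable_const C).mono' hu (Eventually.of_forall fun q => ?_)
  simpa [Real.norm_eq_abs] using hb q

lemma aux_abs_integral_le {α : Type*} [MeasurableSpace α] {μ : Measure α}
    [IsProbabilityMeasure μ] {u : α → ℝ} (hu : AEStronglyMeasurable u μ) {C : ℝ}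
    (hb : ∀ q, |u q| ≤ C) : |∫ q, u q ∂μ| ≤ C := by
  have hint : Integrable u μ := aux_integrable_of_bound hu hb
  calc |∫ q, u q ∂μ| ≤ ∫ q, |u q| ∂μ := by
        simpa [Real.norm_eq_abs] using norm_integral_le_integral_norm u (μ := μ)
    _ ≤ ∫ _, C ∂μ := integral_mono hint.abs (integrable_const C) fun q => hb q
    _ = C := by simp

set_option maxHeartbeats 2000000 in
/-- Let `h₁, h₂` be Borel probability measures on `S¹ × ℝ`, `K > 0`,
and `f : ℝ → ℝ` be `2π`-periodic with `sup |f| = M` and Lipschitz constant `L > 0`.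
Let `x₁, x₂` be (real liftings of) the characteristic flows with initial measures
`h₁, h₂` and the same initial condition `xᵢ(0;θ,ω) = θ`.  If `δ > 0` is such that
`|∫ f(x₁(s;θ',ω') − φ) (dh₁ − dh₂)| ≤ M δ` for all `s ≥ 0` and `φ ∈ ℝ`, then
`∫ |x₁(t;θ,ω) − x₂(t;θ,ω)| dh₂ ≤ (Mδ/(2L)) (e^{2KLt} − 1)` for all `t ≥ 0`. -/
theorem flow_difference_integrated_bound
    (h₁ h₂ : Measure (AddCircle (2 * π) × ℝ))
    [IsProbabilityMeasure h₁] [IsProbabilityMeasure h₂]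
    (K : ℝ) (hK : 0 < K)
    (f : ℝ → ℝ) (hper : Function.Periodic f (2 * π))
    (M : ℝ) (hM : ∀ r : ℝ, |f r| ≤ M)
    (L : NNReal) (hL : 0 < L) (hLip : LipschitzWith L f)
    -- real liftings of the two characteristic flows
    (x₁ x₂ : ℝ → AddCircle (2 * π) × ℝ → ℝ)
    (hinit : ∀ p : AddCircle (2 * π) × ℝ, ((x₁ 0 p : ℝ) : AddCircle (2 * π)) = p.1)
    (hsame : ∀ p, x₁ 0 p = x₂ 0 p)
    (hmeas₁ : ∀ t : ℝ, 0 ≤ t → Measurable (x₁ t))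
    (hmeas₂ : ∀ t : ℝ, 0 ≤ t → Measurable (x₂ t))
    (hode₁ : ∀ p : AddCircle (2 * π) × ℝ, ∀ t : ℝ, 0 ≤ t →
      HasDerivAt (fun s => x₁ s p) (p.2 + K * ∫ q, f (x₁ t q - x₁ t p) ∂h₁) t)
    (hode₂ : ∀ p : AddCircle (2 * π) × ℝ, ∀ t : ℝ, 0 ≤ t →
      HasDerivAt (fun s => x₂ s p) (p.2 + K * ∫ q, f (x₂ t q - x₂ t p) ∂h₂) t)
    (δ : ℝ) (hδpos : 0 < δ)
    (hδ : ∀ s : ℝ, 0 ≤ s → ∀ φ : ℝ,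
      |(∫ q, f (x₁ s q - φ) ∂h₁) - ∫ q, f (x₁ s q - φ) ∂h₂| ≤ M * δ) :
    ∀ t : ℝ, 0 ≤ t →
      ∫ p, |x₁ t p - x₂ t p| ∂h₂ ≤ M * δ / (2 * L) * (Real.exp (2 * K * L * t) - 1) := by
  have hM0 : 0 ≤ M := (abs_nonneg (f 0)).trans (hM 0)
  have hL0 : (0 : ℝ) < (L : ℝ) := hL
  have hfmeas : Measurable f := hLip.continuous.measurable
  -- derivative of the difference
  set Y' : ℝ → AddCircle (2 * π) × ℝ → ℝ := fun s p =>
    K * ((∫ q, f (x₁ s q - x₁ s p) ∂h₁) - ∫ q, f (x₂ s q - x₂ s p) ∂h₂) with hY'_def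
  have hz_deriv : ∀ p : AddCircle (2 * π) × ℝ, ∀ s : ℝ, 0 ≤ s →
      HasDerivAt (fun u => x₁ u p - x₂ u p) (Y' s p) s := by
    intro p s hs
    have h := (hode₁ p s hs).sub (hode₂ p s hs)
    convert h using 1
    all_goals try rfl
    simp only [hY'_def]; ring
  -- bound on the derivative by 2KM
  have hint₁ : ∀ s : ℝ, 0 ≤ s → ∀ c : ℝ,
      |∫ q, f (x₁ s q - c) ∂h₁| ≤ M := by
    intro s hs c
    exact aux_abs_integral_le
      ((hfmeas.comp ((hmeas₁ s hs).sub measurable_const)).aestronglyMeasurable)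
      (fun q => hM _)
  have hint₂ : ∀ s : ℝ, 0 ≤ s → ∀ c : ℝ,
      |∫ q, f (x₂ s q - c) ∂h₂| ≤ M := by
    intro s hs c
    exact aux_abs_integral_le
      ((hfmeas.comp ((hmeas₂ s hs).sub measurable_const)).aestronglyMeasurable)
      (fun q => hM _)
  have hY'2KM : ∀ p, ∀ s : ℝ, 0 ≤ s → |Y' s p| ≤ 2 * K * M := by
    intro p s hs
    have h1 := hint₁ s hs (x₁ s p)
    have h2 := hint₂ s hs (x₂ s p)
    simp only [hY'_def]
    rw [abs_mul, abs_of_pos hK]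
    calc K * |(∫ q, f (x₁ s q - x₁ s p) ∂h₁) - ∫ q, f (x₂ s q - x₂ s p) ∂h₂|
        ≤ K * (M + M) := by
          refine mul_le_mul_of_nonneg_left ?_ hK.le
          calc |(∫ q, f (x₁ s q - x₁ s p) ∂h₁) - ∫ q, f (x₂ s q - x₂ s p) ∂h₂|
              ≤ |∫ q, f (x₁ s q - x₁ s p) ∂h₁| + |∫ q, f (x₂ s q - x₂ s p) ∂h₂| :=
                abs_sub _ _
            _ ≤ M + M := add_le_add h1 h2
      _ = 2 * K * M := by ring
  -- clamped difference flow
  set y : ℝ → AddCircle (2 * π) × ℝ → ℝ := fun s p => x₁ (max s 0) p - x₂ (max s 0) p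
    with hy_def
  have hy0 : ∀ p, y 0 p = 0 := by
    intro p; simp only [hy_def, max_self, max_eq_right le_rfl]
    rw [hsame p]; ring
  have hy_eq : ∀ s : ℝ, 0 ≤ s → ∀ p, y s p = x₁ s p - x₂ s p := by
    intro s hs p; simp only [hy_def, max_eq_left hs]
  -- Lipschitz in time
  have hz_lip : ∀ p, ∀ a b : ℝ, 0 ≤ a → 0 ≤ b →
      |(x₁ b p - x₂ b p) - (x₁ a p - x₂ a p)| ≤ 2 * K * M * |b - a| := by
    intro p a b ha hb
    have := Convex.norm_image_sub_le_of_norm_hasDerivWithin_le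
      (f := fun u => x₁ u p - x₂ u p) (f' := fun u => Y' u p) (C := 2 * K * M)
      (s := Set.Ici (0 : ℝ))
      (fun u hu => (hz_deriv p u hu).hasDerivWithinAt)
      (fun u hu => by simpa [Real.norm_eq_abs] using hY'2KM p u hu)
      (convex_Ici 0) ha hb
    simpa [Real.norm_eq_abs] using this
  have hy_lip : ∀ p, ∀ a b : ℝ, |y b p - y a p| ≤ 2 * K * M * |b - a| := by
    intro p a b
    have h1 := hz_lip p (max a 0) (max b 0) (le_max_right _ _) (le_max_right _ _)
    have h2 : |max b 0 - max a 0| ≤ |b - a| := abs_max_sub_max_le_abs b a 0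
    calc |y b p - y a p| ≤ 2 * K * M * |max b 0 - max a 0| := h1
      _ ≤ 2 * K * M * |b - a| :=
        mul_le_mul_of_nonneg_left h2 (by positivity)
  have hy_cont : ∀ p, Continuous fun s => y s p := by
    intro p
    refine (LipschitzWith.of_dist_le_mul (K := (2 * K * M).toNNReal) fun a b => ?_).continuous
    rw [Real.dist_eq, Real.dist_eq, Real.coe_toNNReal _ (by positivity)]
    exact hy_lip p b a
  have hy_bound : ∀ s : ℝ, ∀ p, |y s p| ≤ 2 * K * M * |s| := by
    intro s p
    have := hy_lip p 0 s
    simpa [hy0 p] using this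
  have hy_meas : ∀ s : ℝ, Measurable (y s) := fun s =>
    (hmeas₁ _ (le_max_right _ _)).sub (hmeas₂ _ (le_max_right _ _))
  have hy_unc : Measurable (Function.uncurry y) :=
    measurable_uncurry_of_continuous_of_measurable hy_cont hy_meas
  -- the integrated difference g
  set g : ℝ → ℝ := fun s => ∫ p, |y s p| ∂h₂ with hg_def
  have hg_int : ∀ s : ℝ, Integrable (fun p => |y s p|) h₂ := by
    intro s
    exact aux_integrable_of_bound ((hy_meas s).abs.aestronglyMeasurable)
      (fun p => by rw [abs_abs]; exact hy_bound s p)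
  have hg_nonneg : ∀ s, 0 ≤ g s := fun s =>
    integral_nonneg fun p => abs_nonneg _
  have hg_bound : ∀ s : ℝ, g s ≤ 2 * K * M * |s| := by
    intro s
    rw [hg_def]
    calc ∫ p, |y s p| ∂h₂
        ≤ ∫ _, 2 * K * M * |s| ∂h₂ :=
          integral_mono (hg_int s) (integrable_const _) fun p => hy_bound s p
      _ = 2 * K * M * |s| := by simp
  have hg_lip : ∀ a b : ℝ, |g b - g a| ≤ 2 * K * M * |b - a| := by
    intro a b
    rw [hg_def]
    rw [← integral_sub (hg_int b) (hg_int a)]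
    refine aux_abs_integral_le (((hy_meas b).abs.sub (hy_meas a).abs).aestronglyMeasurable)
      (fun p => ?_)
    calc |(|y b p| - |y a p|)| ≤ |y b p - y a p| := abs_abs_sub_abs_le_abs_sub _ _
      _ ≤ 2 * K * M * |b - a| := hy_lip p a b
  have hg_cont : Continuous g := by
    refine (LipschitzWith.of_dist_le_mul (K := (2 * K * M).toNNReal) fun a b => ?_).continuous
    rw [Real.dist_eq, Real.dist_eq, Real.coe_toNNReal _ (by positivity)]
    exact hg_lip b a
  have hg_meas : Measurable g := hg_cont.measurable
  -- pointwise derivative bound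
  set w : ℝ → AddCircle (2 * π) × ℝ → ℝ := fun s p =>
    K * (M * δ + (L : ℝ) * g s + (L : ℝ) * |y s p|) with hw_def
  have hw_nonneg : ∀ s p, 0 ≤ w s p := by
    intro s p
    have := hg_nonneg s
    have := abs_nonneg (y s p)
    have := hδpos.le
    positivity
  have hY'w : ∀ p, ∀ s : ℝ, 0 ≤ s → |Y' s p| ≤ w s p := by
    intro p s hs
    have hIB : Integrable (fun q => f (x₁ s q - x₁ s p)) h₂ :=
      aux_integrable_of_bound
        ((hfmeas.comp ((hmeas₁ s hs).sub measurable_const)).aestronglyMeasurable)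
        (fun q => hM _)
    have hIC : Integrable (fun q => f (x₂ s q - x₂ s p)) h₂ :=
      aux_integrable_of_bound
        ((hfmeas.comp ((hmeas₂ s hs).sub measurable_const)).aestronglyMeasurable)
        (fun q => hM _)
    have hAB : |(∫ q, f (x₁ s q - x₁ s p) ∂h₁) - ∫ q, f (x₁ s q - x₁ s p) ∂h₂| ≤ M * δ :=
      hδ s hs (x₁ s p)
    have hBC : |(∫ q, f (x₁ s q - x₁ s p) ∂h₂) - ∫ q, f (x₂ s q - x₂ s p) ∂h₂|
        ≤ (L : ℝ) * g s + (L : ℝ) * |y s p| := by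
      rw [← integral_sub hIB hIC]
      have hptw : ∀ q, |f (x₁ s q - x₁ s p) - f (x₂ s q - x₂ s p)|
          ≤ (L : ℝ) * |y s q| + (L : ℝ) * |y s p| := by
        intro q
        have hd : dist (f (x₁ s q - x₁ s p)) (f (x₂ s q - x₂ s p))
            ≤ (L : ℝ) * dist (x₁ s q - x₁ s p) (x₂ s q - x₂ s p) := hLip.dist_le_mul _ _
        rw [Real.dist_eq, Real.dist_eq] at hd
        refine hd.trans ?_
        rw [hy_eq s hs q, hy_eq s hs p, ← mul_add]
        refine mul_le_mul_of_nonneg_left ?_ L.coe_nonneg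
        calc |x₁ s q - x₁ s p - (x₂ s q - x₂ s p)|
            = |(x₁ s q - x₂ s q) - (x₁ s p - x₂ s p)| := by ring_nf
          _ ≤ |x₁ s q - x₂ s q| + |x₁ s p - x₂ s p| := abs_sub _ _
      calc |∫ q, (f (x₁ s q - x₁ s p) - f (x₂ s q - x₂ s p)) ∂h₂|
          ≤ ∫ q, ((L : ℝ) * |y s q| + (L : ℝ) * |y s p|) ∂h₂ := by
            calc |∫ q, (f (x₁ s q - x₁ s p) - f (x₂ s q - x₂ s p)) ∂h₂|
                ≤ ∫ q, |f (x₁ s q - x₁ s p) - f (x₂ s q - x₂ s p)| ∂h₂ := by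
                  simpa [Real.norm_eq_abs] using
                    norm_integral_le_integral_norm
                      (fun q => f (x₁ s q - x₁ s p) - f (x₂ s q - x₂ s p)) (μ := h₂)
              _ ≤ ∫ q, ((L : ℝ) * |y s q| + (L : ℝ) * |y s p|) ∂h₂ :=
                  integral_mono (hIB.sub hIC).abs
                    (((hg_int s).const_mul _).add (integrable_const _)) hptw
        _ = (L : ℝ) * g s + (L : ℝ) * |y s p| := by
            rw [integral_add (((hg_int s).const_mul _)) (integrable_const _),
              integral_const_mul, integral_const]
            simp [hg_def]
    simp only [hY'_def, hw_def]
    rw [abs_mul, abs_of_pos hK]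
    refine mul_le_mul_of_nonneg_left ?_ hK.le
    calc |(∫ q, f (x₁ s q - x₁ s p) ∂h₁) - ∫ q, f (x₂ s q - x₂ s p) ∂h₂|
        ≤ |(∫ q, f (x₁ s q - x₁ s p) ∂h₁) - ∫ q, f (x₁ s q - x₁ s p) ∂h₂|
          + |(∫ q, f (x₁ s q - x₁ s p) ∂h₂) - ∫ q, f (x₂ s q - x₂ s p) ∂h₂| := by
            have := abs_sub_le (∫ q, f (x₁ s q - x₁ s p) ∂h₁)
              (∫ q, f (x₁ s q - x₁ s p) ∂h₂) (∫ q, f (x₂ s q - x₂ s p) ∂h₂)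
            exact this
      _ ≤ M * δ + ((L : ℝ) * g s + (L : ℝ) * |y s p|) := add_le_add hAB hBC
      _ = M * δ + (L : ℝ) * g s + (L : ℝ) * |y s p| := by ring
  -- continuity & measurability of w
  have hw_cont : ∀ p, Continuous fun s => w s p := by
    intro p
    simp only [hw_def]
    exact continuous_const.mul
      ((continuous_const.add (continuous_const.mul hg_cont)).add
        (continuous_const.mul (hy_cont p).abs))
  have hw_unc : Measurable fun z : ℝ × (AddCircle (2 * π) × ℝ) => w z.1 z.2 := by
    simp only [hw_def]
    have habs : Measurable fun z : ℝ × (AddCircle (2 * π) × ℝ) => |y z.1 z.2| :=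
      hy_unc.abs
    exact measurable_const.mul
      (((measurable_const.add ((hg_meas.comp measurable_fst).const_mul _)).add
        (habs.const_mul _)))
  -- pointwise FTC bound
  have hptw_int : ∀ p, ∀ u : ℝ, 0 ≤ u → |y u p| ≤ ∫ s in (0:ℝ)..u, w s p := by
    intro p u hu
    have hderiv_all : ∀ s ∈ Set.uIcc (0:ℝ) u,
        HasDerivAt (fun v => x₁ v p - x₂ v p) (Y' s p) s := by
      intro s hs
      rw [Set.uIcc_of_le hu] at hs
      exact hz_deriv p s hs.1
    have hII : IntervalIntegrable (fun s => Y' s p) volume 0 u := by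
      rw [intervalIntegrable_iff_integrableOn_Ioc_of_le hu]
      have h1 : IntegrableOn (deriv fun v => x₁ v p - x₂ v p) (Set.Ioc 0 u) volume := by
        refine (integrable_const (2 * K * M)).mono'
          ((measurable_deriv _).aestronglyMeasurable) ?_
        rw [ae_restrict_iff' measurableSet_Ioc]
        refine Eventually.of_forall fun s hs => ?_
        rw [Real.norm_eq_abs, (hz_deriv p s hs.1.le).deriv]
        exact hY'2KM p s hs.1.le
      exact h1.congr_fun (fun s hs => ((hz_deriv p s hs.1.le).deriv)) measurableSet_Ioc
    have hFTC : ∫ s in (0:ℝ)..u, Y' s p = (x₁ u p - x₂ u p) - (x₁ 0 p - x₂ 0 p) :=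
      intervalIntegral.integral_eq_sub_of_hasDerivAt hderiv_all hII
    have hval : ∫ s in (0:ℝ)..u, Y' s p = y u p := by
      rw [hFTC, hy_eq u hu p, hsame p]; ring
    have hwII : IntervalIntegrable (fun s => w s p) volume 0 u :=
      (hw_cont p).intervalIntegrable 0 u
    rw [← hval]
    rw [abs_le]
    constructor
    · have : ∫ s in (0:ℝ)..u, (-(w s p)) ≤ ∫ s in (0:ℝ)..u, Y' s p := by
        refine intervalIntegral.integral_mono_on hu hwII.neg hII fun s hs => ?_
        have := (abs_le.1 (hY'w p s hs.1)).1
        linarith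
      rwa [intervalIntegral.integral_neg] at this
    · refine intervalIntegral.integral_mono_on hu hII hwII fun s hs => ?_
      exact (le_abs_self _).trans (hY'w p s hs.1)
  -- the Gronwall comparison function
  set G : ℝ → ℝ := fun u => ∫ s in (0:ℝ)..u, K * (M * δ + 2 * (L : ℝ) * g s) with hG_def
  have hinteg_cont : Continuous fun s => K * (M * δ + 2 * (L : ℝ) * g s) :=
    continuous_const.mul (continuous_const.add (continuous_const.mul hg_cont))
  -- key integral inequality via Fubini
  have hgG : ∀ u : ℝ, 0 ≤ u → g u ≤ G u := by
    intro u hu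
    set ν : Measure ℝ := volume.restrict (Set.Ioc 0 u) with hν_def
    haveI : IsFiniteMeasure ν := by
      constructor
      rw [hν_def, Measure.restrict_apply_univ]
      exact measure_Ioc_lt_top
    set C : ℝ := K * (M * δ + (L : ℝ) * (2 * K * M * u) + (L : ℝ) * (2 * K * M * u))
      with hC_def
    have hae : ∀ᵐ z ∂(h₂.prod ν), z.2 ∈ Set.Ioc (0:ℝ) u := by
      rw [ae_iff]
      have hset : {z : (AddCircle (2 * π) × ℝ) × ℝ | ¬ z.2 ∈ Set.Ioc (0:ℝ) u}
          = (Set.univ : Set (AddCircle (2 * π) × ℝ)) ×ˢ (Set.Ioc (0:ℝ) u)ᶜ := by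
        ext z; simp
      rw [hset, Measure.prod_prod]
      have hν0 : ν (Set.Ioc (0:ℝ) u)ᶜ = 0 := by
        rw [hν_def, Measure.restrict_apply measurableSet_Ioc.compl]
        simp
      rw [hν0, mul_zero]
    have hWmeas : Measurable (Function.uncurry fun (p : AddCircle (2 * π) × ℝ) (s : ℝ) =>
        w s p) := by
      exact hw_unc.comp measurable_swap
    have hWint : Integrable
        (Function.uncurry fun (p : AddCircle (2 * π) × ℝ) (s : ℝ) => w s p)
        (h₂.prod ν) := by
      refine (integrable_const C).mono' hWmeas.aestronglyMeasurable ?_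
      filter_upwards [hae] with z hz
      show ‖w z.2 z.1‖ ≤ C
      rw [Real.norm_eq_abs, abs_of_nonneg (hw_nonneg _ _)]
      have hz2 : z.2 ≤ u := hz.2
      have hz2' : |z.2| = z.2 := abs_of_pos hz.1
      have h1 : g z.2 ≤ 2 * K * M * u := by
        refine (hg_bound z.2).trans ?_
        rw [hz2']
        exact mul_le_mul_of_nonneg_left hz2 (by positivity)
      have h2 : |y z.2 z.1| ≤ 2 * K * M * u := by
        refine (hy_bound z.2 z.1).trans ?_
        rw [hz2']
        exact mul_le_mul_of_nonneg_left hz2 (by positivity)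
      simp only [hw_def, hC_def]
      refine mul_le_mul_of_nonneg_left ?_ hK.le
      exact add_le_add (add_le_add le_rfl (mul_le_mul_of_nonneg_left h1 L.coe_nonneg))
        (mul_le_mul_of_nonneg_left h2 L.coe_nonneg)
    have hIout : Integrable (fun p => ∫ s, w s p ∂ν) h₂ := hWint.integral_prod_left
    have hstep1 : g u ≤ ∫ p, (∫ s, w s p ∂ν) ∂h₂ := by
      refine integral_mono (hg_int u) hIout fun p => ?_
      have h := hptw_int p u hu
      rwa [intervalIntegral.integral_of_le hu] at h
    have hswap : ∫ p, (∫ s, w s p ∂ν) ∂h₂ = ∫ s, (∫ p, w s p ∂h₂) ∂ν :=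
      integral_integral_swap (f := fun p s => w s p) hWint
    have hinner : ∀ s : ℝ, (∫ p, w s p ∂h₂) = K * (M * δ + 2 * (L : ℝ) * g s) := by
      intro s
      simp only [hw_def]
      rw [integral_const_mul,
        integral_add (integrable_const _) ((hg_int s).const_mul _),
        integral_const, integral_const_mul]
      simp only [probReal_univ, one_smul, hg_def]
      ring
    calc g u ≤ ∫ p, (∫ s, w s p ∂ν) ∂h₂ := hstep1
      _ = ∫ s, (∫ p, w s p ∂h₂) ∂ν := hswap
      _ = ∫ s, K * (M * δ + 2 * (L : ℝ) * g s) ∂ν := by simp only [hinner]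
      _ = G u := by
          simp only [hG_def]
          rw [intervalIntegral.integral_of_le hu, ← hν_def]
  -- Gronwall
  have hGderiv : ∀ v : ℝ, HasDerivAt G (K * (M * δ + 2 * (L : ℝ) * g v)) v := fun v =>
    intervalIntegral.integral_hasDerivAt_right
      (hinteg_cont.intervalIntegrable _ _)
      (hinteg_cont.stronglyMeasurableAtFilter _ _)
      hinteg_cont.continuousAt
  have hGcont : Continuous G :=
    continuous_iff_continuousAt.2 fun v => (hGderiv v).continuousAt
  have hG0 : G 0 = 0 := intervalIntegral.integral_same
  have hGnonneg : ∀ v : ℝ, 0 ≤ v → 0 ≤ G v := by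
    intro v hv
    refine intervalIntegral.integral_nonneg hv fun s _ => ?_
    have := hg_nonneg s
    positivity
  intro t ht
  have hKne : K ≠ 0 := hK.ne'
  have hLne : (L : ℝ) ≠ 0 := hL0.ne'
  have h2KL : (2 * K * (L : ℝ)) ≠ 0 := by positivity
  have hbound : ∀ s ∈ Set.Ico (0:ℝ) t, ‖K * (M * δ + 2 * (L : ℝ) * g s)‖
      ≤ 2 * K * (L : ℝ) * ‖G s‖ + K * (M * δ) := by
    intro s hs
    have h1 : g s ≤ G s := hgG s hs.1
    have hnn : 0 ≤ K * (M * δ + 2 * (L : ℝ) * g s) := by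
      have := hg_nonneg s
      positivity
    rw [Real.norm_eq_abs, Real.norm_eq_abs, abs_of_nonneg hnn,
      abs_of_nonneg (hGnonneg s hs.1)]
    nlinarith [mul_le_mul_of_nonneg_left h1 (by positivity : (0:ℝ) ≤ 2 * K * (L : ℝ))]
  have hgron := norm_le_gronwallBound_of_norm_deriv_right_le
    (a := 0) (b := t) (δ := 0) (K := 2 * K * (L : ℝ)) (ε := K * (M * δ))
    hGcont.continuousOn (fun s _ => (hGderiv s).hasDerivWithinAt)
    (by rw [Real.norm_eq_abs, hG0, abs_zero]) hbound t ⟨ht, le_rfl⟩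
  have hgoal1 : ∫ p, |x₁ t p - x₂ t p| ∂h₂ = g t := by
    have hpt : ∀ p, |x₁ t p - x₂ t p| = |y t p| := fun p => by rw [hy_eq t ht p]
    simp only [hg_def]
    exact integral_congr_ae (Eventually.of_forall hpt)
  calc ∫ p, |x₁ t p - x₂ t p| ∂h₂ = g t := hgoal1
    _ ≤ G t := hgG t ht
    _ ≤ |G t| := le_abs_self _
    _ ≤ gronwallBound 0 (2 * K * (L : ℝ)) (K * (M * δ)) (t - 0) := by
        simpa [Real.norm_eq_abs] using hgron
    _ = M * δ / (2 * (L : ℝ)) * (Real.exp (2 * K * (L : ℝ) * t) - 1) := by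
        simp only [gronwallBound_of_K_ne_0 h2KL, sub_zero, zero_mul, zero_add]
        congr 1
        field_simp
end
end

section
/- Under the same hypotheses as the integrated bound — namely h₁, h₂ Borel probability measures on S¹×ℝ, K > 0, f : ℝ → ℝ 2π-periodic with sup|f| = M and Lipschitz constant L > 0, x₁, x₂ the corresponding characteristic flows with x_i(0;θ,ω) = θ, and δ > 0 such that |∫ f(x₁(s;θ',ω') − φ) (dh₁ − dh₂)| ≤ Mδ for all s ≥ 0, φ ∈ ℝ — the pointwise estimate |x₁(t;θ,ω) − x₂(t;θ,ω)| ≤ (Mδ/(2L)) (e^{2KLt} − 1) holds for all t ≥ 0 and all (θ,ω) ∈ S¹×ℝ. -/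
open MeasureTheory Real Filter

noncomputable section

set_option maxHeartbeats 1600000 in
/-- Under the same hypotheses as Statement 3 — `h₁, h₂` Borel
probability measures on `S¹ × ℝ`, `K > 0`, `f` a `2π`-periodic function with
`sup |f| = M` and Lipschitz constant `L > 0`, `x₁, x₂` the (real liftings of the)
characteristic flows with `xᵢ(0;θ,ω) = θ`, and `δ > 0` such that
`|∫ f(x₁(s;θ',ω') − φ) (dh₁ − dh₂)| ≤ M δ` for all `s ≥ 0`, `φ ∈ ℝ` — the pointwise
estimate `|x₁(t;θ,ω) − x₂(t;θ,ω)| ≤ (Mδ/(2L)) (e^{2KLt} − 1)` holds for all `t ≥ 0`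
and all `(θ, ω) ∈ S¹ × ℝ`. -/
theorem flow_difference_pointwise_bound
    (h₁ h₂ : Measure (AddCircle (2 * π) × ℝ))
    [IsProbabilityMeasure h₁] [IsProbabilityMeasure h₂]
    (K : ℝ) (hK : 0 < K)
    (f : ℝ → ℝ) (hper : Function.Periodic f (2 * π))
    (M : ℝ) (hM : ∀ r : ℝ, |f r| ≤ M)
    (L : NNReal) (hL : 0 < L) (hLip : LipschitzWith L f)
    -- real liftings of the two characteristic flows
    (x₁ x₂ : ℝ → AddCircle (2 * π) × ℝ → ℝ)
    (hinit : ∀ p : AddCircle (2 * π) × ℝ, ((x₁ 0 p : ℝ) : AddCircle (2 * π)) = p.1)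
    (hsame : ∀ p, x₁ 0 p = x₂ 0 p)
    (hmeas₁ : ∀ t : ℝ, 0 ≤ t → Measurable (x₁ t))
    (hmeas₂ : ∀ t : ℝ, 0 ≤ t → Measurable (x₂ t))
    (hode₁ : ∀ p : AddCircle (2 * π) × ℝ, ∀ t : ℝ, 0 ≤ t →
      HasDerivAt (fun s => x₁ s p) (p.2 + K * ∫ q, f (x₁ t q - x₁ t p) ∂h₁) t)
    (hode₂ : ∀ p : AddCircle (2 * π) × ℝ, ∀ t : ℝ, 0 ≤ t →
      HasDerivAt (fun s => x₂ s p) (p.2 + K * ∫ q, f (x₂ t q - x₂ t p) ∂h₂) t)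
    (δ : ℝ) (hδpos : 0 < δ)
    (hδ : ∀ s : ℝ, 0 ≤ s → ∀ φ : ℝ,
      |(∫ q, f (x₁ s q - φ) ∂h₁) - ∫ q, f (x₁ s q - φ) ∂h₂| ≤ M * δ) :
    ∀ t : ℝ, 0 ≤ t → ∀ p : AddCircle (2 * π) × ℝ,
      |x₁ t p - x₂ t p| ≤ M * δ / (2 * L) * (Real.exp (2 * K * L * t) - 1) := by
  intro t ht p
  have hM0 : 0 ≤ M := le_trans (abs_nonneg _) (hM 0)
  have hLr : (0:ℝ) < (L:ℝ) := by exact_mod_cast hL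
  set Lr : ℝ := (L:ℝ) with hLrdef
  set g : (AddCircle (2 * π) × ℝ) → ℝ → ℝ := fun q t => x₁ t q - x₂ t q with hgdef
  set D : (AddCircle (2 * π) × ℝ) → ℝ → ℝ := fun q t =>
    K * ((∫ r, f (x₁ t r - x₁ t q) ∂h₁) - ∫ r, f (x₂ t r - x₂ t q) ∂h₂) with hDdef
  have hg0 : ∀ q, g q 0 = 0 := fun q => sub_eq_zero.2 (hsame q)
  have hderiv : ∀ q, ∀ t : ℝ, 0 ≤ t → HasDerivAt (g q) (D q t) t := by
    intro q t ht
    have h := (hode₁ q t ht).sub (hode₂ q t ht)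
    have : (q.2 + K * ∫ r, f (x₁ t r - x₁ t q) ∂h₁) -
        (q.2 + K * ∫ r, f (x₂ t r - x₂ t q) ∂h₂) = D q t := by
      simp only [hDdef]; ring
    rw [this] at h
    exact h
  have fmeas : Measurable f := hLip.continuous.measurable
  have hintf : ∀ (y : (AddCircle (2 * π) × ℝ) → ℝ), Measurable y → ∀ φ : ℝ,
      ∀ μ : Measure (AddCircle (2 * π) × ℝ), IsProbabilityMeasure μ →
      Integrable (fun q => f (y q - φ)) μ := by
    intro y hy φ μ hμ
    refine (integrable_const M).mono'
      ((fmeas.comp (hy.sub measurable_const)).aestronglyMeasurable) ?_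
    exact Filter.Eventually.of_forall fun q => by
      simpa [Real.norm_eq_abs] using hM (y q - φ)
  have habsint : ∀ (y : (AddCircle (2 * π) × ℝ) → ℝ), Measurable y → ∀ φ : ℝ,
      ∀ μ : Measure (AddCircle (2 * π) × ℝ), IsProbabilityMeasure μ →
      |∫ q, f (y q - φ) ∂μ| ≤ M := by
    intro y hy φ μ hμ
    have := norm_integral_le_of_norm_le_const (μ := μ)
      (f := fun q => f (y q - φ)) (C := M)
      (Filter.Eventually.of_forall fun q => by
        simpa [Real.norm_eq_abs] using hM (y q - φ))
    simpa [measure_univ, Real.norm_eq_abs] using this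
  have hDcrude : ∀ q, ∀ t : ℝ, 0 ≤ t → |D q t| ≤ 2 * K * M := by
    intro q t ht
    have h1 := habsint (x₁ t) (hmeas₁ t ht) (x₁ t q) h₁ ‹_›
    have h2 := habsint (x₂ t) (hmeas₂ t ht) (x₂ t q) h₂ ‹_›
    have habs : |(∫ r, f (x₁ t r - x₁ t q) ∂h₁) - ∫ r, f (x₂ t r - x₂ t q) ∂h₂|
        ≤ M + M := le_trans (abs_sub _ _) (add_le_add h1 h2)
    calc |D q t| = K * |(∫ r, f (x₁ t r - x₁ t q) ∂h₁) -
          ∫ r, f (x₂ t r - x₂ t q) ∂h₂| := by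
          rw [hDdef]; rw [abs_mul, abs_of_pos hK]
      _ ≤ K * (M + M) := by
          exact mul_le_mul_of_nonneg_left habs hK.le
      _ = 2 * K * M := by ring
  have hcrude : ∀ q, ∀ s t : ℝ, 0 ≤ s → s ≤ t → |g q t - g q s| ≤ 2*K*M*(t - s) := by
    intro q s t hs hst
    have h := (convex_Icc s t).norm_image_sub_le_of_norm_hasDerivWithin_le
      (f := g q) (f' := D q) (C := 2*K*M)
      (fun u hu => (hderiv q u (le_trans hs hu.1)).hasDerivWithinAt)
      (fun u hu => by simpa [Real.norm_eq_abs] using hDcrude q u (le_trans hs hu.1))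
      (Set.left_mem_Icc.2 hst) (Set.right_mem_Icc.2 hst)
    simpa [Real.norm_eq_abs, abs_of_nonneg (sub_nonneg.2 hst)] using h
  have hcrude0 : ∀ q, ∀ t : ℝ, 0 ≤ t → |g q t| ≤ 2*K*M*t := by
    intro q t ht
    have := hcrude q 0 t le_rfl ht
    simpa [hg0 q] using this
  have hgint : ∀ t : ℝ, 0 ≤ t → Integrable (fun q => |g q t|) h₂ := by
    intro t ht
    refine (integrable_const (2*K*M*t)).mono'
      (((hmeas₁ t ht).sub (hmeas₂ t ht)).abs.aestronglyMeasurable) ?_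
    exact Filter.Eventually.of_forall fun q => by
      simpa [Real.norm_eq_abs, abs_abs] using hcrude0 q t ht
  set w : ℝ → ℝ := fun t => ∫ q, |g q t| ∂h₂ with hwdef
  have hw0 : w 0 = 0 := by
    have : (fun q : AddCircle (2 * π) × ℝ => |g q 0|) = fun _ => (0:ℝ) :=
      funext fun q => by rw [hg0 q, abs_zero]
    simp only [hwdef, this, integral_zero]
  have hwLip : ∀ s t : ℝ, 0 ≤ s → s ≤ t → |w t - w s| ≤ 2*K*M*(t - s) := by
    intro s t hs hst
    have ht0 : 0 ≤ t := hs.trans hst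
    rw [hwdef]
    rw [← integral_sub (hgint t ht0) (hgint s hs)]
    have := norm_integral_le_of_norm_le_const (μ := h₂)
      (f := fun q => |g q t| - |g q s|) (C := 2*K*M*(t-s))
      (Filter.Eventually.of_forall fun q => by
        have h1 : |(|g q t| - |g q s|)| ≤ |g q t - g q s| := abs_abs_sub_abs_le_abs_sub _ _
        have h2 := hcrude q s t hs hst
        simp only [Real.norm_eq_abs]
        linarith)
    simpa [measure_univ, Real.norm_eq_abs] using this
  have hwnn : ∀ t : ℝ, 0 ≤ w t := fun t => integral_nonneg fun q => abs_nonneg _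
  -- main derivative bound
  have hDmain : ∀ q, ∀ t : ℝ, 0 ≤ t →
      |D q t| ≤ K*M*δ + K*Lr*(w t + |g q t|) := by
    intro q t ht
    have hA : |(∫ r, f (x₁ t r - x₁ t q) ∂h₁) - ∫ r, f (x₁ t r - x₁ t q) ∂h₂| ≤ M*δ :=
      hδ t ht (x₁ t q)
    have hB : |(∫ r, f (x₁ t r - x₁ t q) ∂h₂) - ∫ r, f (x₂ t r - x₂ t q) ∂h₂|
        ≤ Lr * (w t + |g q t|) := by
      rw [← integral_sub (hintf (x₁ t) (hmeas₁ t ht) (x₁ t q) h₂ ‹_›)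
        (hintf (x₂ t) (hmeas₂ t ht) (x₂ t q) h₂ ‹_›)]
      have hbint : Integrable (fun r => Lr * (|g r t| + |g q t|)) h₂ :=
        ((hgint t ht).add (integrable_const _)).const_mul Lr
      have hptw : ∀ r, ‖f (x₁ t r - x₁ t q) - f (x₂ t r - x₂ t q)‖
          ≤ Lr * (|g r t| + |g q t|) := by
        intro r
        have h1 : |f (x₁ t r - x₁ t q) - f (x₂ t r - x₂ t q)|
            ≤ Lr * |(x₁ t r - x₁ t q) - (x₂ t r - x₂ t q)| := by
          have h := hLip.dist_le_mul (x₁ t r - x₁ t q) (x₂ t r - x₂ t q)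
          rw [Real.dist_eq, Real.dist_eq] at h
          exact h
        have h2 : |(x₁ t r - x₁ t q) - (x₂ t r - x₂ t q)| ≤ |g r t| + |g q t| := by
          have heq : (x₁ t r - x₁ t q) - (x₂ t r - x₂ t q) = g r t - g q t := by
            simp only [hgdef]; ring
          rw [heq]; exact abs_sub _ _
        rw [Real.norm_eq_abs]
        calc |f (x₁ t r - x₁ t q) - f (x₂ t r - x₂ t q)|
            ≤ Lr * |(x₁ t r - x₁ t q) - (x₂ t r - x₂ t q)| := h1
          _ ≤ Lr * (|g r t| + |g q t|) := mul_le_mul_of_nonneg_left h2 hLr.le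
      have hn := norm_integral_le_of_norm_le (μ := h₂) hbint
        (Filter.Eventually.of_forall hptw)
      rw [Real.norm_eq_abs] at hn
      refine hn.trans (le_of_eq ?_)
      rw [integral_const_mul, integral_add (hgint t ht) (integrable_const _),
        integral_const]
      simp [measure_univ, hwdef]
    have hsum : |(∫ r, f (x₁ t r - x₁ t q) ∂h₁) - ∫ r, f (x₂ t r - x₂ t q) ∂h₂|
        ≤ M*δ + Lr * (w t + |g q t|) := by
      have := abs_add_le ((∫ r, f (x₁ t r - x₁ t q) ∂h₁) - ∫ r, f (x₁ t r - x₁ t q) ∂h₂)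
        ((∫ r, f (x₁ t r - x₁ t q) ∂h₂) - ∫ r, f (x₂ t r - x₂ t q) ∂h₂)
      rw [sub_add_sub_cancel] at this
      exact this.trans (add_le_add hA hB)
    calc |D q t| = K * |(∫ r, f (x₁ t r - x₁ t q) ∂h₁) -
          ∫ r, f (x₂ t r - x₂ t q) ∂h₂| := by rw [hDdef, abs_mul, abs_of_pos hK]
      _ ≤ K * (M*δ + Lr * (w t + |g q t|)) := mul_le_mul_of_nonneg_left hsum hK.le
      _ = K*M*δ + K*Lr*(w t + |g q t|) := by ring
  have hstep : ∀ q, ∀ t z : ℝ, 0 ≤ t → t ≤ z →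
      |g q z - g q t| ≤ (K*M*δ + K*Lr*(w t + |g q t|) + 4*K*K*Lr*M*(z - t)) * (z - t) := by
    intro q t z ht htz
    have hbnd : ∀ u ∈ Set.Icc t z,
        ‖D q u‖ ≤ K*M*δ + K*Lr*(w t + |g q t|) + 4*K*K*Lr*M*(z - t) := by
      intro u hu
      have hu0 : 0 ≤ u := ht.trans hu.1
      have h1 := hDmain q u hu0
      have h2 : w u ≤ w t + 2*K*M*(u - t) := by
        have := hwLip t u ht hu.1
        have := abs_le.1 this
        linarith [this.2]
      have h3 : |g q u| ≤ |g q t| + 2*K*M*(u - t) := by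
        have ha := hcrude q t u ht hu.1
        have hb := abs_sub_abs_le_abs_sub (g q u) (g q t)
        linarith
      have h4 : w u + |g q u| ≤ w t + |g q t| + 4*K*M*(u - t) := by linarith
      have h5 : K*Lr*(w u + |g q u|) ≤ K*Lr*(w t + |g q t|) + 4*K*K*Lr*M*(u - t) := by
        have := mul_le_mul_of_nonneg_left h4 (mul_pos hK hLr).le
        nlinarith [this]
      have h6 : 4*K*K*Lr*M*(u - t) ≤ 4*K*K*Lr*M*(z - t) := by
        have : (0:ℝ) ≤ 4*K*K*Lr*M := by positivity
        nlinarith [hu.2]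
      rw [Real.norm_eq_abs]
      linarith
    have h := (convex_Icc t z).norm_image_sub_le_of_norm_hasDerivWithin_le
      (f := g q) (f' := D q)
      (fun u hu => (hderiv q u (ht.trans hu.1)).hasDerivWithinAt)
      hbnd (Set.left_mem_Icc.2 htz) (Set.right_mem_Icc.2 htz)
    simpa [Real.norm_eq_abs, abs_of_nonneg (sub_nonneg.2 htz)] using h
  have hwstep : ∀ t z : ℝ, 0 ≤ t → t ≤ z →
      w z - w t ≤ (K*M*δ + 2*K*Lr*(w t) + 4*K*K*Lr*M*(z - t)) * (z - t) := by
    intro t z ht htz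
    have hz0 : 0 ≤ z := ht.trans htz
    have hb : ∀ q, |g q z| - |g q t| ≤
        (K*Lr*(z - t)) * |g q t| + (K*M*δ + K*Lr*(w t) + 4*K*K*Lr*M*(z - t)) * (z - t) := by
      intro q
      have h := hstep q t z ht htz
      have h2 := abs_sub_abs_le_abs_sub (g q z) (g q t)
      nlinarith [h, h2]
    have hint1 : Integrable
        (fun q => (K*Lr*(z - t)) * |g q t| +
          (K*M*δ + K*Lr*(w t) + 4*K*K*Lr*M*(z - t)) * (z - t)) h₂ :=
      ((hgint t ht).const_mul _).add (integrable_const _)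
    have hmono := integral_mono (μ := h₂) ((hgint z hz0).sub (hgint t ht)) hint1 hb
    simp only [Pi.sub_apply] at hmono
    rw [integral_sub (hgint z hz0) (hgint t ht)] at hmono
    rw [integral_add ((hgint t ht).const_mul _) (integrable_const _),
      integral_const_mul, integral_const] at hmono
    simp only [measure_univ, probReal_univ, ENNReal.toReal_one, smul_eq_mul, one_mul] at hmono
    have : (K*Lr*(z - t)) * w t + (K*M*δ + K*Lr*(w t) + 4*K*K*Lr*M*(z - t)) * (z - t)
        = (K*M*δ + 2*K*Lr*(w t) + 4*K*K*Lr*M*(z - t)) * (z - t) := by ring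
    calc w z - w t ≤ _ := hmono
      _ = _ := this
  set c : ℝ := M*δ/(2*Lr) with hcdef
  have hc0 : 0 ≤ c := by positivity
  have hq : 2*Lr*c = M*δ := by
    rw [hcdef]; field_simp
  set W : ℝ → ℝ := fun t => c * (Real.exp (2*K*Lr*t) - 1) with hWdef
  have hWcont : Continuous W := by
    apply Continuous.mul continuous_const
    exact (Real.continuous_exp.comp (continuous_const.mul continuous_id)).sub continuous_const
  have hWlow : ∀ x z : ℝ, x ≤ z → (2*K*Lr*(W x) + K*(M*δ))*(z - x) ≤ W z - W x := by
    intro x z hxz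
    have hd0 : 0 ≤ 2*K*Lr*(z-x) := by
      have : (0:ℝ) ≤ z - x := by linarith
      positivity
    have hexp : Real.exp (2*K*Lr*z) = Real.exp (2*K*Lr*x) * Real.exp (2*K*Lr*(z-x)) := by
      rw [← Real.exp_add]; ring_nf
    have h1 : 2*K*Lr*(z-x) + 1 ≤ Real.exp (2*K*Lr*(z-x)) := Real.add_one_le_exp _
    have hEpos : (0:ℝ) < Real.exp (2*K*Lr*x) := Real.exp_pos _
    have key : c * Real.exp (2*K*Lr*x) * (2*K*Lr*(z-x))
        ≤ c * Real.exp (2*K*Lr*x) * (Real.exp (2*K*Lr*(z-x)) - 1) :=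
      mul_le_mul_of_nonneg_left (by linarith) (mul_nonneg hc0 hEpos.le)
    have e1 : W z - W x = c * Real.exp (2*K*Lr*x) * (Real.exp (2*K*Lr*(z-x)) - 1) := by
      simp only [hWdef]; rw [hexp]; ring
    have e2 : (2*K*Lr*(W x) + K*(M*δ))*(z - x)
        = c * Real.exp (2*K*Lr*x) * (2*K*Lr*(z-x)) := by
      simp only [hWdef]; rw [← hq]; ring
    rw [e1, e2]; exact key
  have hC₁ : (0:ℝ) ≤ 4*K*K*Lr*M := by positivity
  have hC1' : (0:ℝ) < 4*K*K*Lr*M + 1 := by positivity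
  -- integrated bound
  have hwW : ∀ b : ℝ, 0 ≤ b → w b ≤ W b := by
    intro b hb
    have hcont : ContinuousOn w (Set.Icc 0 b) := by
      have hlip : LipschitzOnWith (Real.toNNReal (2*K*M)) w (Set.Icc 0 b) := by
        apply LipschitzOnWith.of_dist_le_mul
        intro u hu v hv
        have hco : ((Real.toNNReal (2*K*M) : NNReal) : ℝ) = 2*K*M :=
          Real.coe_toNNReal _ (by positivity)
        rw [hco, Real.dist_eq, Real.dist_eq]
        rcases le_total u v with h | h
        · rw [abs_sub_comm (w u) (w v), abs_sub_comm u v,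
            abs_of_nonneg (sub_nonneg.2 h)]
          exact hwLip u v hu.1 h
        · rw [abs_of_nonneg (sub_nonneg.2 h)]
          exact hwLip v u hv.1 h
      exact hlip.continuousOn
    have hdini : ∀ x ∈ Set.Ico (0:ℝ) b, ∀ r,
        K*M*δ + 2*K*Lr*(w x) < r →
        ∃ᶠ z in nhdsWithin x (Set.Ioi x), (z - x)⁻¹ * (w z - w x) < r := by
      intro x hx r hr
      set η := (r - (K*M*δ + 2*K*Lr*(w x)))/(4*K*K*Lr*M + 1) with hη
      have hη0 : 0 < η := div_pos (by linarith) hC1'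
      apply Filter.Eventually.frequently
      filter_upwards [Ioo_mem_nhdsGT_of_mem
        (Set.mem_Ico.2 ⟨le_refl x, lt_add_of_pos_right x hη0⟩)] with z hz
      have hxz : x < z := hz.1
      have hzη : z - x < η := by linarith [hz.2]
      have h1 := hwstep x z hx.1 hxz.le
      have h2 : K*M*δ + 2*K*Lr*(w x) + 4*K*K*Lr*M*(z - x) < r := by
        have ha : 4*K*K*Lr*M*(z-x) ≤ (4*K*K*Lr*M)*η := mul_le_mul_of_nonneg_left hzη.le hC₁
        have hb' : (4*K*K*Lr*M)*η < (4*K*K*Lr*M + 1)*η := by nlinarith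
        have heq : (4*K*K*Lr*M + 1)*η = r - (K*M*δ + 2*K*Lr*(w x)) := by
          rw [hη]; field_simp
        linarith
      rw [inv_mul_lt_iff₀ (by linarith : (0:ℝ) < z - x)]
      calc w z - w x ≤ (K*M*δ + 2*K*Lr*(w x) + 4*K*K*Lr*M*(z - x)) * (z - x) := h1
        _ < (z - x) * r := by nlinarith [sub_pos.2 hxz]
    have hg1 := le_gronwallBound_of_liminf_deriv_right_le
      (f := w) (f' := fun s => K*M*δ + 2*K*Lr*(w s)) (δ := 0) (K := 2*K*Lr) (ε := K*M*δ)
      (a := 0) (b := b) hcont hdini (le_of_eq hw0)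
      (fun x _ => by linarith)
    have hfin := hg1 b (Set.mem_Icc.2 ⟨hb, le_rfl⟩)
    rw [gronwallBound_of_K_ne_0 (by positivity : (2*K*Lr) ≠ 0)] at hfin
    simp only [sub_zero, zero_mul, zero_add] at hfin
    have hcoef : K*M*δ/(2*K*Lr) = c := by
      rw [hcdef]; field_simp
    calc w b ≤ K*M*δ/(2*K*Lr) * (Real.exp (2*K*Lr*b) - 1) := hfin
      _ = W b := by rw [hcoef]
  have main : ∀ t₀ : ℝ, 0 ≤ t₀ → ∀ p, |g p t₀| ≤ W t₀ := by
    intro t₀ ht₀ p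
    set F : ℝ → ℝ := fun t => |g p t| - W t with hFdef
    have hgc : ContinuousOn F (Set.Icc 0 t₀) := by
      apply ContinuousOn.sub
      · exact fun u hu => ((hderiv p u hu.1).continuousAt.continuousWithinAt).abs
      · exact hWcont.continuousOn
    have hdini2 : ∀ x ∈ Set.Ico (0:ℝ) t₀, ∀ r,
        K*Lr*(F x) < r →
        ∃ᶠ z in nhdsWithin x (Set.Ioi x), (z - x)⁻¹ * (F z - F x) < r := by
      intro x hx r hr
      set η := (r - K*Lr*(F x))/(4*K*K*Lr*M + 1) with hη
      have hη0 : 0 < η := div_pos (by linarith) hC1'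
      apply Filter.Eventually.frequently
      filter_upwards [Ioo_mem_nhdsGT_of_mem
        (Set.mem_Ico.2 ⟨le_refl x, lt_add_of_pos_right x hη0⟩)] with z hz
      have hxz : x < z := hz.1
      have hzη : z - x < η := by linarith [hz.2]
      have hA : |g p z| - |g p x| ≤
          (K*M*δ + K*Lr*(w x + |g p x|) + 4*K*K*Lr*M*(z - x)) * (z - x) := by
        have h1 := hstep p x z hx.1 hxz.le
        have h2 := abs_sub_abs_le_abs_sub (g p z) (g p x)
        linarith
      have hB := hWlow x z hxz.le
      have hwx := hwW x hx.1
      have hKL : (0:ℝ) ≤ K*Lr := (mul_pos hK hLr).le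
      have hneg : (K*Lr*(w x) - K*Lr*(W x))*(z - x) ≤ 0 :=
        mul_nonpos_of_nonpos_of_nonneg
          (by linarith [mul_le_mul_of_nonneg_left hwx hKL]) (by linarith)
      have e : (K*M*δ + K*Lr*(w x + |g p x|) + 4*K*K*Lr*M*(z-x)) * (z-x)
          - (2*K*Lr*(W x) + K*(M*δ))*(z-x)
          = (K*Lr*(w x) - K*Lr*(W x))*(z-x)
            + (K*Lr*(F x) + 4*K*K*Lr*M*(z-x))*(z-x) := by
        simp only [hFdef]; ring
      have hnum : F z - F x ≤ (K*Lr*(F x) + 4*K*K*Lr*M*(z - x)) * (z - x) := by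
        have : F z - F x = (|g p z| - |g p x|) - (W z - W x) := by
          simp only [hFdef]; ring
        linarith
      have h2 : K*Lr*(F x) + 4*K*K*Lr*M*(z - x) < r := by
        have ha : 4*K*K*Lr*M*(z-x) ≤ (4*K*K*Lr*M)*η := mul_le_mul_of_nonneg_left hzη.le hC₁
        have hb' : (4*K*K*Lr*M)*η < (4*K*K*Lr*M + 1)*η := by nlinarith
        have heq : (4*K*K*Lr*M + 1)*η = r - K*Lr*(F x) := by
          rw [hη]; field_simp
        linarith
      rw [inv_mul_lt_iff₀ (by linarith : (0:ℝ) < z - x)]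
      calc F z - F x ≤ (K*Lr*(F x) + 4*K*K*Lr*M*(z - x)) * (z - x) := hnum
        _ < (z - x) * r := by nlinarith [sub_pos.2 hxz]
    have hinit2 : F 0 ≤ 0 := by
      simp only [hFdef, hWdef, hg0 p, abs_zero, mul_zero, Real.exp_zero]
      simp
    have hg2 := le_gronwallBound_of_liminf_deriv_right_le
      (f := F) (f' := fun s => K*Lr*(F s)) (δ := 0) (K := K*Lr) (ε := 0)
      (a := 0) (b := t₀) hgc hdini2 hinit2
      (fun x _ => by linarith)
    have hfin := hg2 t₀ (Set.mem_Icc.2 ⟨ht₀, le_rfl⟩)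
    rw [gronwallBound_ε0_δ0] at hfin
    have : F t₀ ≤ 0 := hfin
    simp only [hFdef] at this
    linarith

  exact main t ht p
end
end

section
/- Let K > 0, T > 0, and let a : S¹×ℝ → ℝ be bounded and Lipschitz continuous. Then there exists a constant C > 0 (depending on K, T and a) such that for every δ > 0 and all Borel probability measures h₁, h₂ on S¹×ℝ satisfying |∫ b (dh₁ − dh₂)| ≤ δ (sup|b| + Lip(b)) for every bounded Lipschitz function b : S¹×ℝ → ℝ, the corresponding solutions ρ_{t,1}, ρ_{t,2} of the continuous Kuramoto model with ρ_{0,1} = h₁, ρ_{0,2} = h₂ satisfy |∫ a (dρ_{t,1} − dρ_{t,2})| ≤ C δ for all 0 ≤ t ≤ T; i.e., for Lipschitz test functions the weak distance of solutions is of order O(δ) in the weak distance of initial measures. -/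
open MeasureTheory Real Filter

noncomputable section

/-- The characteristic flow of the continuous Kuramoto model with coupling constant `K`
and initial measure `h`: `x(0;θ,ω) = θ`, `x(t;·)` is Borel measurable, and `t ↦ x(t;θ,ω)`
is `C¹` with `∂x/∂t = ω + K ∫ sin(x(t;θ',ω') − x(t;θ,ω)) dh(θ',ω')` for `t ≥ 0`
(`Sin` denotes the descent of `sin` to `S¹ = ℝ/2πℤ`). -/
def IsKuramotoFlow (K : ℝ) (Sin : AddCircle (2 * π) → ℝ)
    (h : Measure (AddCircle (2 * π) × ℝ))
    (x : ℝ → AddCircle (2 * π) × ℝ → AddCircle (2 * π)) : Prop :=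
  (∀ p, x 0 p = p.1) ∧
  (∀ t : ℝ, 0 ≤ t → Measurable (x t)) ∧
  (∀ p : AddCircle (2 * π) × ℝ, ∃ y : ℝ → ℝ,
    ContDiff ℝ 1 y ∧ (∀ t : ℝ, (y t : AddCircle (2 * π)) = x t p) ∧
    ∀ t : ℝ, 0 ≤ t →
      HasDerivAt y (p.2 + K * ∫ q, Sin (x t q - x t p) ∂h) t)

namespace KuramotoAux

lemma real_sin_lip : LipschitzWith 1 Real.sin :=
  lipschitzWith_of_nnnorm_deriv_le Real.differentiable_sin
    (fun x => by rw [Real.deriv_sin, ← NNReal.coe_le_coe]; simpa using Real.abs_cos_le_one x)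

lemma coe_surj : Function.Surjective ((↑) : ℝ → AddCircle (2 * π)) :=
  QuotientAddGroup.mk_surjective

lemma dist_coe_le (x y : ℝ) : dist (x : AddCircle (2 * π)) (y : AddCircle (2 * π)) ≤ |x - y| := by
  rw [dist_eq_norm, ← AddCircle.coe_sub]
  simpa using (QuotientAddGroup.norm_mk_le_norm (S := AddSubgroup.zmultiples (2 * π)) (m := x - y))

lemma coe_round_zero (z : ℝ) :
    ((round ((2 * π)⁻¹ * z) * (2 * π) : ℝ) : AddCircle (2 * π)) = 0 := by
  rw [AddCircle.coe_eq_zero_iff]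
  exact ⟨round ((2 * π)⁻¹ * z), by push_cast [zsmul_eq_mul]; ring⟩

lemma sin_lipschitz {Sin : AddCircle (2 * π) → ℝ}
    (hSin : ∀ r : ℝ, Sin (r : AddCircle (2 * π)) = Real.sin r) :
    LipschitzWith 1 Sin := by
  apply LipschitzWith.of_dist_le_mul
  intro u v
  obtain ⟨x, rfl⟩ := coe_surj u
  obtain ⟨y, rfl⟩ := coe_surj v
  set n : ℤ := round ((2 * π)⁻¹ * (x - y)) with hn
  have h1 : ((x - n * (2 * π) : ℝ) : AddCircle (2 * π)) = (x : AddCircle (2 * π)) := by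
    rw [AddCircle.coe_sub, coe_round_zero (x - y), sub_zero]
  calc dist (Sin x) (Sin y) = |Real.sin (x - n * (2 * π)) - Real.sin y| := by
        rw [← h1, hSin, hSin, Real.dist_eq]
    _ ≤ |(x - n * (2 * π)) - y| := by
        have := real_sin_lip.dist_le_mul (x - n * (2 * π)) y
        rw [Real.dist_eq, Real.dist_eq] at this; simpa using this
    _ = |(x - y) - round ((2 * π)⁻¹ * (x - y)) * (2 * π)| := by rw [hn]; ring_nf
    _ = ‖((x - y : ℝ) : AddCircle (2 * π))‖ := (AddCircle.norm_eq _).symm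
    _ = 1 * dist (x : AddCircle (2 * π)) (y : AddCircle (2 * π)) := by
        rw [dist_eq_norm, ← AddCircle.coe_sub, one_mul]

lemma sin_bdd {Sin : AddCircle (2 * π) → ℝ}
    (hSin : ∀ r : ℝ, Sin (r : AddCircle (2 * π)) = Real.sin r)
    (u : AddCircle (2 * π)) : |Sin u| ≤ 1 := by
  obtain ⟨x, rfl⟩ := coe_surj u
  rw [hSin]
  exact abs_le.mpr ⟨Real.neg_one_le_sin x, Real.sin_le_one x⟩

lemma circle_norm_le (u : AddCircle (2 * π)) : ‖u‖ ≤ π := by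
  obtain ⟨z, rfl⟩ := coe_surj u
  rw [AddCircle.norm_eq]
  have h : z - round ((2 * π)⁻¹ * z) * (2 * π) = (2 * π) * ((2 * π)⁻¹ * z - round ((2 * π)⁻¹ * z)) := by
    field_simp
  rw [h, abs_mul]
  have h2 := abs_sub_round ((2 * π)⁻¹ * z)
  have hp : |2 * π| = 2 * π := abs_of_pos (by positivity)
  rw [hp]
  nlinarith [Real.pi_pos]

lemma circle_dist_le (u v : AddCircle (2 * π)) : dist u v ≤ π := by
  rw [dist_eq_norm]; exact circle_norm_le _

lemma dist_sub_sub (a b a' b' : AddCircle (2 * π)) :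
    dist (a - b) (a' - b') ≤ dist a a' + dist b b' := by
  rw [dist_eq_norm, dist_eq_norm, dist_eq_norm, sub_sub_sub_comm]
  exact (norm_sub_le _ _)

lemma dist_const_sub (c b b' : AddCircle (2 * π)) :
    dist (c - b) (c - b') = dist b b' := by
  rw [dist_eq_norm, sub_sub_sub_cancel_left, dist_eq_norm']


lemma integrand_integrable {K : ℝ} {Sin : AddCircle (2 * π) → ℝ}
    (hSin : ∀ r : ℝ, Sin (r : AddCircle (2 * π)) = Real.sin r)
    {h : Measure (AddCircle (2 * π) × ℝ)} [IsProbabilityMeasure h]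
    {x : ℝ → AddCircle (2 * π) × ℝ → AddCircle (2 * π)}
    (hx : IsKuramotoFlow K Sin h x)
    (h' : Measure (AddCircle (2 * π) × ℝ)) [IsProbabilityMeasure h']
    {r : ℝ} (hr : 0 ≤ r) (c : AddCircle (2 * π)) :
    Integrable (fun z => Sin (x r z - c)) h' := by
  have hmz : Measurable fun z => Sin (x r z - c) :=
    (sin_lipschitz hSin).continuous.measurable.comp ((hx.2.1 r hr).sub measurable_const)
  exact (integrable_const (1 : ℝ)).mono' hmz.aestronglyMeasurable
    (Filter.Eventually.of_forall fun z => by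
      simpa [Real.norm_eq_abs] using sin_bdd hSin (x r z - c))

lemma flow_continuous {K : ℝ} {Sin : AddCircle (2 * π) → ℝ}
    {h : Measure (AddCircle (2 * π) × ℝ)}
    {x : ℝ → AddCircle (2 * π) × ℝ → AddCircle (2 * π)}
    (hx : IsKuramotoFlow K Sin h x) (p : AddCircle (2 * π) × ℝ) :
    Continuous fun r => x r p := by
  obtain ⟨y, hyC, hyL, _⟩ := hx.2.2 p
  have : (fun r => x r p) = fun r => ((y r : ℝ) : AddCircle (2 * π)) :=
    funext fun r => (hyL r).symm
  rw [this]
  exact (AddCircle.continuous_mk' _).comp hyC.continuous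

lemma flow_lip {K T : ℝ} (hK : 0 < K) {Sin : AddCircle (2 * π) → ℝ}
    (hSin : ∀ r : ℝ, Sin (r : AddCircle (2 * π)) = Real.sin r)
    {h : Measure (AddCircle (2 * π) × ℝ)} [IsProbabilityMeasure h]
    {x : ℝ → AddCircle (2 * π) × ℝ → AddCircle (2 * π)}
    (hx : IsKuramotoFlow K Sin h x) {s : ℝ} (hs0 : 0 ≤ s) (hsT : s ≤ T)
    (q q' : AddCircle (2 * π) × ℝ) :
    dist (x s q) (x s q') ≤ (Real.exp (K * T) * (1 + 1 / K)) * dist q q' := by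
  obtain ⟨y, hyC, hyL, hyD⟩ := hx.2.2 q
  obtain ⟨y', hy'C, hy'L, hy'D⟩ := hx.2.2 q'
  set m : ℝ := round ((2 * π)⁻¹ * (y 0 - y' 0)) * (2 * π) with hm
  have hm0 : ((m : ℝ) : AddCircle (2 * π)) = 0 := coe_round_zero _
  set u : ℝ → ℝ := fun r => y r - y' r - m with hu
  set u' : ℝ → ℝ := fun r => deriv y r - deriv y' r with hu'
  have hud : ∀ r, HasDerivAt u (u' r) r := fun r =>
    (((hyC.differentiable one_ne_zero).differentiableAt.hasDerivAt).sub
      ((hy'C.differentiable one_ne_zero).differentiableAt.hasDerivAt)).sub_const m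
  have hcd : ∀ r : ℝ, dist (x r q) (x r q') ≤ |u r| := by
    intro r
    have h2 : ((y' r + m : ℝ) : AddCircle (2 * π)) = ((y' r : ℝ) : AddCircle (2 * π)) := by
      rw [AddCircle.coe_add, hm0, add_zero]
    calc dist (x r q) (x r q') = dist ((y r : ℝ) : AddCircle (2 * π)) ((y' r + m : ℝ) : AddCircle (2 * π)) := by
          rw [← hyL r, ← hy'L r, h2]
      _ ≤ |y r - (y' r + m)| := dist_coe_le _ _
      _ = |u r| := by rw [hu]; ring_nf
  have hu0 : |u 0| = dist q.1 q'.1 := by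
    calc |u 0| = |(y 0 - y' 0) - round ((2 * π)⁻¹ * (y 0 - y' 0)) * (2 * π)| := by
          rw [hu, hm]
      _ = ‖((y 0 - y' 0 : ℝ) : AddCircle (2 * π))‖ := (AddCircle.norm_eq _).symm
      _ = dist ((y 0 : ℝ) : AddCircle (2 * π)) ((y' 0 : ℝ) : AddCircle (2 * π)) := by
          rw [dist_eq_norm, ← AddCircle.coe_sub]
      _ = dist q.1 q'.1 := by rw [hyL 0, hy'L 0, hx.1 q, hx.1 q']
  have hbound : ∀ r ∈ Set.Ico 0 s, ‖u' r‖ ≤ K * ‖u r‖ + |q.2 - q'.2| := by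
    intro r hr
    have hr0 : (0 : ℝ) ≤ r := hr.1
    have hd1 := (hyD r hr0).deriv
    have hd2 := (hy'D r hr0).deriv
    have hint1 := integrand_integrable hSin hx h hr0 (x r q)
    have hint2 := integrand_integrable hSin hx h hr0 (x r q')
    have key : ∀ z, ‖Sin (x r z - x r q) - Sin (x r z - x r q')‖ ≤ dist (x r q) (x r q') := by
      intro z
      calc ‖Sin (x r z - x r q) - Sin (x r z - x r q')‖
          = dist (Sin (x r z - x r q)) (Sin (x r z - x r q')) := (dist_eq_norm _ _).symm
        _ ≤ (1 : NNReal) * dist (x r z - x r q) (x r z - x r q') :=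
            (sin_lipschitz hSin).dist_le_mul _ _
        _ = dist (x r q) (x r q') := by rw [dist_const_sub]; norm_num
    have hI : ‖∫ z, (Sin (x r z - x r q) - Sin (x r z - x r q')) ∂h‖ ≤ dist (x r q) (x r q') := by
      have := norm_integral_le_of_norm_le_const (μ := h)
        (f := fun z => Sin (x r z - x r q) - Sin (x r z - x r q'))
        (C := dist (x r q) (x r q')) (Filter.Eventually.of_forall key)
      simpa using this
    have heq : u' r = (q.2 - q'.2) + K * ∫ z, (Sin (x r z - x r q) - Sin (x r z - x r q')) ∂h := by
      rw [hu']
      simp only [hd1, hd2]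
      rw [integral_sub hint1 hint2]
      ring
    calc ‖u' r‖ ≤ |q.2 - q'.2| + ‖K * ∫ z, (Sin (x r z - x r q) - Sin (x r z - x r q')) ∂h‖ := by
          rw [heq]; exact (norm_add_le _ _).trans (by rw [Real.norm_eq_abs (q.2 - q'.2)])
      _ ≤ |q.2 - q'.2| + K * (dist (x r q) (x r q')) := by
          rw [norm_mul, Real.norm_eq_abs K, abs_of_pos hK]
          exact add_le_add_right (mul_le_mul_of_nonneg_left hI hK.le) _
      _ ≤ |q.2 - q'.2| + K * ‖u r‖ := by
          have := (hcd r).trans_eq (Real.norm_eq_abs (u r)).symm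
          exact add_le_add_right (mul_le_mul_of_nonneg_left this hK.le) _
      _ = K * ‖u r‖ + |q.2 - q'.2| := by ring
  have hgb := norm_le_gronwallBound_of_norm_deriv_right_le (f := u) (f' := u')
    (δ := dist q.1 q'.1) (K := K) (ε := |q.2 - q'.2|) (a := 0) (b := s)
    (fun r _ => (hud r).continuousAt.continuousWithinAt)
    (fun r _ => (hud r).hasDerivWithinAt)
    (by rw [Real.norm_eq_abs, hu0]) hbound s ⟨hs0, le_rfl⟩
  rw [sub_zero, gronwallBound_of_K_ne_0 hK.ne'] at hgb
  have h1 : dist q.1 q'.1 ≤ dist q q' := by rw [Prod.dist_eq]; exact le_max_left _ _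
  have h2 : |q.2 - q'.2| ≤ dist q q' := by
    rw [Prod.dist_eq, ← Real.dist_eq]; exact le_max_right _ _
  have hexp : Real.exp (K * s) ≤ Real.exp (K * T) :=
    Real.exp_le_exp.mpr (mul_le_mul_of_nonneg_left hsT hK.le)
  have hexp1 : (1 : ℝ) ≤ Real.exp (K * s) := Real.one_le_exp (by positivity)
  have hdnn : (0 : ℝ) ≤ dist q q' := dist_nonneg
  calc dist (x s q) (x s q') ≤ |u s| := hcd s
    _ = ‖u s‖ := (Real.norm_eq_abs _).symm
    _ ≤ dist q.1 q'.1 * Real.exp (K * s) + |q.2 - q'.2| / K * (Real.exp (K * s) - 1) := hgb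
    _ ≤ dist q q' * Real.exp (K * T) + dist q q' / K * Real.exp (K * T) := by
      have s1 : dist q.1 q'.1 * Real.exp (K * s) ≤ dist q q' * Real.exp (K * T) := by
        nlinarith [dist_nonneg (x := q.1) (y := q'.1), Real.exp_pos (K * s)]
      have hA : |q.2 - q'.2| / K ≤ dist q q' / K := by
        exact div_le_div_of_nonneg_right h2 hK.le
      have s2 : |q.2 - q'.2| / K * (Real.exp (K * s) - 1) ≤ dist q q' / K * Real.exp (K * T) := by
        apply mul_le_mul hA (by linarith) (by linarith) (by positivity)
      linarith
    _ = (Real.exp (K * T) * (1 + 1 / K)) * dist q q' := by field_simp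

end KuramotoAux


set_option maxHeartbeats 1000000 in
open KuramotoAux in
/-- For `K > 0`, `T > 0` and a bounded Lipschitz test function `a`,
there is a constant `C > 0` (depending on `K`, `T` and `a`) such that for every `δ > 0`
and all initial probability measures `h₁, h₂` with
`|∫ b (dh₁ − dh₂)| ≤ δ (sup|b| + Lip(b))` for every bounded Lipschitz `b`, the
corresponding solutions of the continuous Kuramoto model satisfy
`|∫ a (dρ_{t,1} − dρ_{t,2})| ≤ C δ` for all `0 ≤ t ≤ T`: for Lipschitz test functions the
weak distance of solutions is `O(δ)` in the weak distance of the initial measures. -/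
theorem lipschitz_dependence_on_initial_measure
    (K T : ℝ) (hK : 0 < K) (hT : 0 < T)
    (Sin : AddCircle (2 * π) → ℝ)
    (hSin : ∀ r : ℝ, Sin (r : AddCircle (2 * π)) = Real.sin r)
    (a : AddCircle (2 * π) × ℝ → ℝ)
    (Ca : ℝ) (haB : ∀ p, |a p| ≤ Ca)
    (La : NNReal) (haLip : LipschitzWith La a) :
    ∃ C : ℝ, 0 < C ∧
      ∀ δ : ℝ, 0 < δ →
      ∀ (h₁ h₂ : Measure (AddCircle (2 * π) × ℝ)),
        IsProbabilityMeasure h₁ → IsProbabilityMeasure h₂ →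
        ∀ (x₁ x₂ : ℝ → AddCircle (2 * π) × ℝ → AddCircle (2 * π)),
          IsKuramotoFlow K Sin h₁ x₁ → IsKuramotoFlow K Sin h₂ x₂ →
          (∀ (b : AddCircle (2 * π) × ℝ → ℝ) (Cb Lb : NNReal),
            (∀ p, |b p| ≤ Cb) → LipschitzWith Lb b →
            |(∫ p, b p ∂h₁) - ∫ p, b p ∂h₂| ≤ δ * ((Cb : ℝ) + Lb)) →
          ∀ t : ℝ, 0 ≤ t → t ≤ T →
            |(∫ p, a p ∂(h₁.map fun p => (x₁ t p, p.2))) -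
              ∫ p, a p ∂(h₂.map fun p => (x₂ t p, p.2))| ≤ C * δ := by
  have hCa0 : 0 ≤ Ca := le_trans (abs_nonneg _) (haB (0, 0))
  set CL : ℝ := Real.exp (K * T) * (1 + 1 / K) with hCLdef
  have hCL1 : (1 : ℝ) ≤ CL := by
    have h1 := Real.one_le_exp (show 0 ≤ K * T by positivity)
    have h1K : (0 : ℝ) < 1 / K := by positivity
    nlinarith
  have hCL0 : (0 : ℝ) < CL := lt_of_lt_of_le one_pos hCL1
  have hE0 : (0 : ℝ) < Real.exp (2 * K * T) := Real.exp_pos _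
  refine ⟨Ca + La * CL + La * (K * (1 + CL) * T * Real.exp (2 * K * T)) + 1, ?_, ?_⟩
  · have t1 : (0 : ℝ) ≤ (La : ℝ) * CL := mul_nonneg La.coe_nonneg hCL0.le
    have t2 : (0 : ℝ) ≤ (La : ℝ) * (K * (1 + CL) * T * Real.exp (2 * K * T)) :=
      mul_nonneg La.coe_nonneg
        (mul_nonneg (mul_nonneg (mul_nonneg hK.le (by linarith)) hT.le) hE0.le)
    linarith
  intro δ hδ h₁ h₂ hP₁ hP₂ x₁ x₂ F₁ F₂ hW t ht0 htT
  haveI := hP₁; haveI := hP₂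
  have hL₁ : ∀ {s : ℝ}, 0 ≤ s → s ≤ T → ∀ q q',
      dist (x₁ s q) (x₁ s q') ≤ CL * dist q q' :=
    fun hs0 hsT q q' => flow_lip hK hSin F₁ hs0 hsT q q'
  -- the distance between the two flows, and its h₂-average
  set D : ℝ → (AddCircle (2 * π) × ℝ) → ℝ :=
    fun s p => dist (x₁ (max s 0) p) (x₂ (max s 0) p) with hDdef
  set ψ : ℝ → ℝ := fun s => ∫ p, D s p ∂h₂ with hψdef
  have hDmeas : ∀ s, Measurable (D s) := fun s =>
    (F₁.2.1 _ (le_max_right s 0)).dist (F₂.2.1 _ (le_max_right s 0))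
  have hDbd : ∀ s p, D s p ≤ π := fun s p => circle_dist_le _ _
  have hDnn : ∀ s p, 0 ≤ D s p := fun s p => dist_nonneg
  have hDcont : ∀ p, Continuous fun s => D s p := fun p =>
    ((flow_continuous F₁ p).comp (continuous_id.max continuous_const)).dist
      ((flow_continuous F₂ p).comp (continuous_id.max continuous_const))
  have hDeq : ∀ {s : ℝ}, 0 ≤ s → ∀ p, D s p = dist (x₁ s p) (x₂ s p) := by
    intro s hs p; simp only [hDdef, max_eq_left hs]
  have hDint : ∀ s, Integrable (D s) h₂ := fun s =>
    (integrable_const π).mono' (hDmeas s).aestronglyMeasurable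
      (Filter.Eventually.of_forall fun p => by
        rw [Real.norm_eq_abs, abs_of_nonneg (hDnn s p)]; exact hDbd s p)
  have hψcont : Continuous ψ := by
    rw [continuous_iff_continuousAt]; intro s₀
    apply continuousAt_of_dominated (bound := fun _ => π)
    · exact Filter.Eventually.of_forall fun s => (hDmeas s).aestronglyMeasurable
    · exact Filter.Eventually.of_forall fun s => Filter.Eventually.of_forall fun p => by
        rw [Real.norm_eq_abs, abs_of_nonneg (hDnn s p)]; exact hDbd s p
    · exact integrable_const π
    · exact Filter.Eventually.of_forall fun p => (hDcont p).continuousAt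
  have hψnn : ∀ s, 0 ≤ ψ s := fun s => integral_nonneg fun p => hDnn s p
  have hDj : Measurable (Function.uncurry D) :=
    measurable_uncurry_of_continuous_of_measurable (fun p => hDcont p) hDmeas
  -- Step C: pointwise integral inequality
  have hkey : ∀ t', 0 ≤ t' → t' ≤ T → ∀ p, D t' p ≤
      ∫ s in (0:ℝ)..t', (K * (δ * (1 + CL)) + K * ψ s + K * D s p) := by
    intro t' ht'0 ht'T p
    obtain ⟨y₁, hy₁C, hy₁L, hy₁D⟩ := F₁.2.2 p
    obtain ⟨y₂, hy₂C, hy₂L, hy₂D⟩ := F₂.2.2 p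
    set w' : ℝ → ℝ := fun r => deriv y₁ r - deriv y₂ r with hw'def
    have hw'cont : Continuous w' :=
      (hy₁C.continuous_deriv le_rfl).sub (hy₂C.continuous_deriv le_rfl)
    have hwd : ∀ r, HasDerivAt (fun r => y₁ r - y₂ r) (w' r) r := fun r =>
      ((hy₁C.differentiable one_ne_zero).differentiableAt.hasDerivAt).sub
        ((hy₂C.differentiable one_ne_zero).differentiableAt.hasDerivAt)
    have hftc : (∫ r in (0:ℝ)..t', w' r) = (y₁ t' - y₂ t') - (y₁ 0 - y₂ 0) :=
      intervalIntegral.integral_eq_sub_of_hasDerivAt (fun r _ => hwd r)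
        (hw'cont.intervalIntegrable 0 t')
    have h0 : ((y₁ 0 - y₂ 0 : ℝ) : AddCircle (2 * π)) = 0 := by
      rw [AddCircle.coe_sub, hy₁L 0, hy₂L 0, F₁.1 p, F₂.1 p, sub_self]
    have hDt : D t' p ≤ |∫ r in (0:ℝ)..t', w' r| := by
      have h2 : ((y₂ t' + (y₁ 0 - y₂ 0) : ℝ) : AddCircle (2 * π))
          = ((y₂ t' : ℝ) : AddCircle (2 * π)) := by
        rw [AddCircle.coe_add, h0, add_zero]
      calc D t' p = dist ((y₁ t' : ℝ) : AddCircle (2 * π))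
            ((y₂ t' + (y₁ 0 - y₂ 0) : ℝ) : AddCircle (2 * π)) := by
            rw [hDeq ht'0, ← hy₁L t', ← hy₂L t', h2]
        _ ≤ |y₁ t' - (y₂ t' + (y₁ 0 - y₂ 0))| := dist_coe_le _ _
        _ = |∫ r in (0:ℝ)..t', w' r| := by rw [hftc]; ring_nf
    have hpt : ∀ s ∈ Set.Icc (0:ℝ) t', |w' s| ≤
        K * (δ * (1 + CL)) + K * ψ s + K * D s p := by
      intro s hs
      have hs0 : (0:ℝ) ≤ s := hs.1
      have hsT : s ≤ T := hs.2.trans ht'T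
      have hd1 := (hy₁D s hs0).deriv
      have hd2 := (hy₂D s hs0).deriv
      have hw's : w' s = K * (∫ q, Sin (x₁ s q - x₁ s p) ∂h₁)
          - K * (∫ q, Sin (x₂ s q - x₂ s p) ∂h₂) := by
        rw [hw'def]; simp only [hd1, hd2]; ring
      set b : AddCircle (2 * π) × ℝ → ℝ := fun q => Sin (x₁ s q - x₁ s p) with hbdef
      have hb1 : ∀ q, |b q| ≤ ((1 : NNReal) : ℝ) := fun q => by
        simpa using sin_bdd hSin (x₁ s q - x₁ s p)
      have hbLip : LipschitzWith ⟨CL, hCL0.le⟩ b := by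
        apply LipschitzWith.of_dist_le_mul
        intro q q'
        calc dist (b q) (b q') ≤ (1 : NNReal) * dist (x₁ s q - x₁ s p) (x₁ s q' - x₁ s p) :=
              (sin_lipschitz hSin).dist_le_mul _ _
          _ = dist (x₁ s q) (x₁ s q') := by rw [dist_sub_right]; norm_num
          _ ≤ CL * dist q q' := hL₁ hs0 hsT q q'
      have hWb := hW b 1 ⟨CL, hCL0.le⟩ hb1 hbLip
      have hWb' : |(∫ q, b q ∂h₁) - ∫ q, b q ∂h₂| ≤ δ * (1 + CL) := by
        exact_mod_cast hWb
      have hint2b : Integrable b h₂ := integrand_integrable hSin F₁ h₂ hs0 (x₁ s p)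
      have hint2c : Integrable (fun q => Sin (x₂ s q - x₂ s p)) h₂ :=
        integrand_integrable hSin F₂ h₂ hs0 (x₂ s p)
      have hBC : |(∫ q, b q ∂h₂) - ∫ q, Sin (x₂ s q - x₂ s p) ∂h₂| ≤ ψ s + D s p := by
        rw [← integral_sub hint2b hint2c]
        have hptw : ∀ q, ‖b q - Sin (x₂ s q - x₂ s p)‖ ≤ D s q + D s p := by
          intro q
          calc ‖b q - Sin (x₂ s q - x₂ s p)‖
              = dist (Sin (x₁ s q - x₁ s p)) (Sin (x₂ s q - x₂ s p)) := (dist_eq_norm _ _).symm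
            _ ≤ (1 : NNReal) * dist (x₁ s q - x₁ s p) (x₂ s q - x₂ s p) :=
                (sin_lipschitz hSin).dist_le_mul _ _
            _ ≤ 1 * (dist (x₁ s q) (x₂ s q) + dist (x₁ s p) (x₂ s p)) := by
                have := dist_sub_sub (x₁ s q) (x₁ s p) (x₂ s q) (x₂ s p)
                have h1 : ((1 : NNReal) : ℝ) = (1:ℝ) := by norm_num
                rw [h1, one_mul, one_mul]
                exact this
            _ = D s q + D s p := by rw [one_mul, hDeq hs0, hDeq hs0]
        have hbint : Integrable (fun q => D s q + D s p) h₂ := by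
          exact (hDint s).add (integrable_const _)
        have hnorm := norm_integral_le_of_norm_le hbint
          (Filter.Eventually.of_forall hptw)
        rw [integral_add (hDint s) (integrable_const _), integral_const] at hnorm
        simpa [Real.norm_eq_abs, measure_univ] using hnorm
      have habs : |w' s| ≤ K * (δ * (1 + CL) + (ψ s + D s p)) := by
        rw [hw's, ← mul_sub, abs_mul, abs_of_pos hK]
        apply mul_le_mul_of_nonneg_left _ hK.le
        calc |(∫ q, b q ∂h₁) - ∫ q, Sin (x₂ s q - x₂ s p) ∂h₂|
            ≤ |(∫ q, b q ∂h₁) - ∫ q, b q ∂h₂|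
              + |(∫ q, b q ∂h₂) - ∫ q, Sin (x₂ s q - x₂ s p) ∂h₂| := abs_sub_le _ _ _
          _ ≤ δ * (1 + CL) + (ψ s + D s p) := add_le_add hWb' hBC
      have hring : K * (δ * (1 + CL) + (ψ s + D s p))
          = K * (δ * (1 + CL)) + K * ψ s + K * D s p := by ring
      linarith [habs]
    calc D t' p ≤ |∫ r in (0:ℝ)..t', w' r| := hDt
      _ ≤ ∫ r in (0:ℝ)..t', |w' r| := intervalIntegral.abs_integral_le_integral_abs ht'0
      _ ≤ ∫ s in (0:ℝ)..t', (K * (δ * (1 + CL)) + K * ψ s + K * D s p) := by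
          apply intervalIntegral.integral_mono_on ht'0 (hw'cont.abs.intervalIntegrable 0 t')
            (((continuous_const.add (continuous_const.mul hψcont)).add
              (continuous_const.mul (hDcont p))).intervalIntegrable 0 t') hpt
  -- Step D: averaged integral inequality
  have hψkey : ∀ t', 0 ≤ t' → t' ≤ T →
      ψ t' ≤ K * (δ * (1 + CL)) * t' + 2 * K * ∫ s in (0:ℝ)..t', ψ s := by
    intro t' ht'0 ht'T
    set k : (AddCircle (2 * π) × ℝ) → ℝ := fun p => ∫ s in (0:ℝ)..t', D s p with hkdef
    have hkeq : ∀ p, k p = ∫ s in Set.Ioc (0:ℝ) t', D s p :=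
      fun p => intervalIntegral.integral_of_le ht'0
    have hprod : Integrable (Function.uncurry fun p (s : ℝ) => D s p)
        (h₂.prod (volume.restrict (Set.Ioc 0 t'))) := by
      refine (integrable_const π).mono' ?_ (Filter.Eventually.of_forall ?_)
      · exact (hDj.comp measurable_swap).aestronglyMeasurable
      · intro z
        simp only [Function.uncurry, Real.norm_eq_abs]
        rw [abs_of_nonneg (hDnn _ _)]; exact hDbd _ _
    have hkint : Integrable k h₂ := by
      have heq : k = fun p => ∫ s in Set.Ioc (0:ℝ) t', D s p := funext hkeq
      rw [heq]; exact hprod.integral_prod_left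
    have hknn : ∀ p, 0 ≤ k p := fun p =>
      intervalIntegral.integral_nonneg ht'0 fun s _ => hDnn s p
    have hkbd : ∀ p, k p ≤ π * t' := by
      intro p
      calc k p ≤ ∫ _ in (0:ℝ)..t', π :=
            intervalIntegral.integral_mono_on ht'0 ((hDcont p).intervalIntegrable 0 t')
              (continuous_const.intervalIntegrable 0 t') fun s _ => hDbd s p
        _ = π * t' := by simp [mul_comm]
    have hswap : (∫ p, k p ∂h₂) = ∫ s in (0:ℝ)..t', ψ s := by
      calc (∫ p, k p ∂h₂) = ∫ p, (∫ s in Set.Ioc (0:ℝ) t', D s p) ∂h₂ :=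
            integral_congr_ae (Filter.Eventually.of_forall fun p => hkeq p)
        _ = ∫ s in Set.Ioc (0:ℝ) t', (∫ p, D s p ∂h₂) := integral_integral_swap hprod
        _ = ∫ s in (0:ℝ)..t', ψ s := (intervalIntegral.integral_of_le ht'0).symm
    have hsplit : ∀ p, (∫ s in (0:ℝ)..t', (K * (δ * (1 + CL)) + K * ψ s + K * D s p))
        = (K * (δ * (1 + CL)) * t' + K * ∫ s in (0:ℝ)..t', ψ s) + K * k p := by
      intro p
      rw [intervalIntegral.integral_add
            (f := fun s => K * (δ * (1 + CL)) + K * ψ s) (g := fun s => K * D s p)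
            ((continuous_const.add (continuous_const.mul hψcont)).intervalIntegrable 0 t')
            ((continuous_const.mul (hDcont p)).intervalIntegrable 0 t'),
          intervalIntegral.integral_add (f := fun _ => K * (δ * (1 + CL))) (g := fun s => K * ψ s)
            (continuous_const.intervalIntegrable 0 t')
            ((continuous_const.mul hψcont).intervalIntegrable 0 t'),
          intervalIntegral.integral_const, intervalIntegral.integral_const_mul,
          intervalIntegral.integral_const_mul]
      simp only [hkdef, smul_eq_mul, sub_zero]
      ring
    have hmono : ψ t' ≤ ∫ p, ((K * (δ * (1 + CL)) * t' + K * ∫ s in (0:ℝ)..t', ψ s) + K * k p) ∂h₂ := by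
      have hgint : Integrable (fun p => (K * (δ * (1 + CL)) * t' + K * ∫ s in (0:ℝ)..t', ψ s) + K * k p) h₂ := by
        exact (integrable_const _).add (hkint.const_mul K)
      apply integral_mono (hDint t') hgint
      intro p
      exact (hkey t' ht'0 ht'T p).trans_eq (hsplit p)
    rw [integral_add (integrable_const _) (hkint.const_mul K), integral_const,
        integral_const_mul, hswap] at hmono
    simp only [probReal_univ, one_smul] at hmono
    linarith
  -- Step E: Gronwall
  set c : ℝ := K * (δ * (1 + CL)) with hcdef
  have hc0 : 0 ≤ c := by
    have : (0:ℝ) ≤ δ * (1 + CL) := mul_nonneg hδ.le (by linarith)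
    exact mul_nonneg hK.le this
  set Φ : ℝ → ℝ := fun r => ∫ s in (0:ℝ)..r, ψ s with hΦdef
  have hΦd : ∀ r, HasDerivAt Φ (ψ r) r := fun r =>
    (hψcont.integral_hasStrictDerivAt 0 r).hasDerivAt
  have h2K : (0:ℝ) < 2 * K := by linarith
  have hgb := norm_le_gronwallBound_of_norm_deriv_right_le (f := Φ) (f' := ψ)
    (δ := 0) (K := 2 * K) (ε := c * T) (a := 0) (b := T)
    (fun r _ => (hΦd r).continuousAt.continuousWithinAt)
    (fun r _ => (hΦd r).hasDerivWithinAt)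
    (by simp [hΦdef])
    (by
      intro r hr
      rw [Real.norm_eq_abs, abs_of_nonneg (hψnn r)]
      have h1 := hψkey r hr.1 hr.2.le
      have h2 : (2 * K) * Φ r ≤ (2 * K) * |Φ r| :=
        mul_le_mul_of_nonneg_left (le_abs_self _) h2K.le
      have h3 : c * r ≤ c * T := mul_le_mul_of_nonneg_left hr.2.le hc0
      rw [Real.norm_eq_abs]
      have hΦr : Φ r = ∫ s in (0:ℝ)..r, ψ s := rfl
      calc ψ r ≤ c * r + 2 * K * Φ r := by rw [hΦr]; linarith [h1]
        _ ≤ 2 * K * |Φ r| + c * T := by linarith)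
    t ⟨ht0, htT⟩
  rw [sub_zero, gronwallBound_of_K_ne_0 h2K.ne'] at hgb
  have hΦt : Φ t ≤ c * T / (2 * K) * (Real.exp (2 * K * t) - 1) := by
    have := (le_abs_self (Φ t)).trans ((Real.norm_eq_abs (Φ t)) ▸ hgb)
    simpa using this
  have hψt : ψ t ≤ c * T * Real.exp (2 * K * T) := by
    have h1 := hψkey t ht0 htT
    have hct : c * t ≤ c * T := mul_le_mul_of_nonneg_left htT hc0
    have he : Real.exp (2 * K * t) ≤ Real.exp (2 * K * T) :=
      Real.exp_le_exp.mpr (mul_le_mul_of_nonneg_left htT h2K.le)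
    have h3 : 2 * K * Φ t ≤ c * T * (Real.exp (2 * K * t) - 1) := by
      have h4 := mul_le_mul_of_nonneg_left hΦt h2K.le
      calc 2 * K * Φ t ≤ 2 * K * (c * T / (2 * K) * (Real.exp (2 * K * t) - 1)) := h4
        _ = c * T * (Real.exp (2 * K * t) - 1) := by field_simp
    have hΦint : Φ t = ∫ s in (0:ℝ)..t, ψ s := rfl
    have hcT : 0 ≤ c * T := mul_nonneg hc0 hT.le
    calc ψ t ≤ c * t + 2 * K * (∫ s in (0:ℝ)..t, ψ s) := h1
      _ = c * t + 2 * K * Φ t := by rw [hΦint]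
      _ ≤ c * T + c * T * (Real.exp (2 * K * t) - 1) := by linarith
      _ = c * T * Real.exp (2 * K * t) := by ring
      _ ≤ c * T * Real.exp (2 * K * T) := mul_le_mul_of_nonneg_left he hcT
  -- Step F: conclusion
  have hmap₁ : (∫ p, a p ∂(h₁.map fun p => (x₁ t p, p.2))) = ∫ p, a (x₁ t p, p.2) ∂h₁ :=
    integral_map ((F₁.2.1 t ht0).prodMk measurable_snd).aemeasurable
      haLip.continuous.aestronglyMeasurable
  have hmap₂ : (∫ p, a p ∂(h₂.map fun p => (x₂ t p, p.2))) = ∫ p, a (x₂ t p, p.2) ∂h₂ :=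
    integral_map ((F₂.2.1 t ht0).prodMk measurable_snd).aemeasurable
      haLip.continuous.aestronglyMeasurable
  rw [hmap₁, hmap₂]
  set b1 : AddCircle (2 * π) × ℝ → ℝ := fun p => a (x₁ t p, p.2) with hb1def
  set b2 : AddCircle (2 * π) × ℝ → ℝ := fun p => a (x₂ t p, p.2) with hb2def
  have hb1m : Measurable b1 :=
    haLip.continuous.measurable.comp ((F₁.2.1 t ht0).prodMk measurable_snd)
  have hb2m : Measurable b2 :=
    haLip.continuous.measurable.comp ((F₂.2.1 t ht0).prodMk measurable_snd)
  have hb1i : Integrable b1 h₂ :=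
    (integrable_const Ca).mono' hb1m.aestronglyMeasurable
      (Filter.Eventually.of_forall fun p => by rw [Real.norm_eq_abs]; exact haB _)
  have hb2i : Integrable b2 h₂ :=
    (integrable_const Ca).mono' hb2m.aestronglyMeasurable
      (Filter.Eventually.of_forall fun p => by rw [Real.norm_eq_abs]; exact haB _)
  have hb1Lip : LipschitzWith (La * ⟨CL, hCL0.le⟩) b1 := by
    apply LipschitzWith.of_dist_le_mul
    intro q q'
    have hcoe : ((La * ⟨CL, hCL0.le⟩ : NNReal) : ℝ) = (La : ℝ) * CL := by
      push_cast; rfl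
    rw [hcoe]
    calc dist (b1 q) (b1 q') ≤ La * dist ((x₁ t q, q.2)) ((x₁ t q', q'.2)) :=
          haLip.dist_le_mul _ _
      _ ≤ La * (CL * dist q q') := by
          apply mul_le_mul_of_nonneg_left _ La.coe_nonneg
          rw [Prod.dist_eq]
          apply max_le (hL₁ ht0 htT q q')
          calc dist q.2 q'.2 ≤ dist q q' := by rw [Prod.dist_eq]; exact le_max_right _ _
            _ ≤ CL * dist q q' := by nlinarith [dist_nonneg (x := q) (y := q')]
      _ = (La : ℝ) * CL * dist q q' := by ring
  have hT1 : |(∫ p, b1 p ∂h₁) - ∫ p, b1 p ∂h₂| ≤ δ * (Ca + La * CL) := by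
    have := hW b1 Ca.toNNReal (La * ⟨CL, hCL0.le⟩)
      (fun p => by rw [Real.coe_toNNReal Ca hCa0]; exact haB _) hb1Lip
    have hcoe1 : ((Ca.toNNReal : ℝ)) = Ca := Real.coe_toNNReal Ca hCa0
    have hcoe2 : ((La * ⟨CL, hCL0.le⟩ : NNReal) : ℝ) = (La : ℝ) * CL := by push_cast; rfl
    rw [hcoe1, hcoe2] at this
    exact this
  have hT2 : |(∫ p, b1 p ∂h₂) - ∫ p, b2 p ∂h₂| ≤ (La : ℝ) * ψ t := by
    rw [← integral_sub hb1i hb2i]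
    have hptw : ∀ p, ‖b1 p - b2 p‖ ≤ (La : ℝ) * D t p := by
      intro p
      have hdd : dist ((x₁ t p, p.2) : AddCircle (2 * π) × ℝ) ((x₂ t p, p.2)) = D t p := by
        rw [Prod.dist_eq, dist_self, hDeq ht0]
        exact max_eq_left dist_nonneg
      calc ‖b1 p - b2 p‖ = dist (b1 p) (b2 p) := (dist_eq_norm _ _).symm
        _ ≤ La * dist ((x₁ t p, p.2) : AddCircle (2 * π) × ℝ) ((x₂ t p, p.2)) :=
            haLip.dist_le_mul _ _
        _ = (La : ℝ) * D t p := by rw [hdd]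
    have hnorm := norm_integral_le_of_norm_le ((hDint t).const_mul (La : ℝ))
      (Filter.Eventually.of_forall hptw)
    rw [integral_const_mul] at hnorm
    simpa [Real.norm_eq_abs] using hnorm
  have hfin : (La : ℝ) * (c * T * Real.exp (2 * K * T))
      = δ * ((La : ℝ) * (K * (1 + CL) * T * Real.exp (2 * K * T))) := by
    rw [hcdef]; ring
  calc |(∫ p, b1 p ∂h₁) - ∫ p, b2 p ∂h₂|
      ≤ |(∫ p, b1 p ∂h₁) - ∫ p, b1 p ∂h₂| + |(∫ p, b1 p ∂h₂) - ∫ p, b2 p ∂h₂| :=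
        abs_sub_le _ _ _
    _ ≤ δ * (Ca + La * CL) + (La : ℝ) * (c * T * Real.exp (2 * K * T)) := by
        have := hT2.trans (mul_le_mul_of_nonneg_left hψt La.coe_nonneg)
        linarith [hT1]
    _ ≤ (Ca + La * CL + La * (K * (1 + CL) * T * Real.exp (2 * K * T)) + 1) * δ := by
        rw [hfin]; nlinarith [hδ.le]
end
end
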